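/- Assume y*_u ≤ 0 (equivalently γ ≥ β_p). Then every solution y of the reduced hybrid SIS dynamics with y(0) ∈ (0,1] is nonincreasing on [0,∞) and satisfies y(t) → 0 as t → ∞. -/

import Mathlib

/-- A solution of the reduced hybrid SIS dynamics obtained under timescale
separation: a differentiable y : [0,∞) → [0,1] following the dynamics with
β = β_p below the threshold y*_int = c_P/(L(1−α)β_p), β = αβ_p above it, and a
convex combination (parametrized by z ∈ [0,1]) at the threshold. -/
def IsReducedSISSol (βp α γ cP L : ℝ) (y : ℝ → ℝ) : Prop :=
  (∀ t ≥ (0:ℝ), y t ∈ Set.Icc (0:ℝ) 1) ∧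
  ∀ t ≥ (0:ℝ),
    (y t < cP / (L * (1 - α) * βp) →
      HasDerivAt y (((1 - y t) * βp - γ) * y t) t) ∧
    (cP / (L * (1 - α) * βp) < y t →
      HasDerivAt y (((1 - y t) * (α * βp) - γ) * y t) t) ∧
    (y t = cP / (L * (1 - α) * βp) → ∃ z ∈ Set.Icc (0:ℝ) 1,
      HasDerivAt y
        (((1 - cP / (L * (1 - α) * βp)) * (z + α * (1 - z)) * βp - γ) *
          (cP / (L * (1 - α) * βp))) t)

/-- If y*_u = 1 − γ/β_p ≤ 0 (i.e. γ ≥ β_p), every solution of the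
reduced hybrid SIS dynamics with y(0) ∈ (0,1] is nonincreasing and converges
to 0. -/
theorem reduced_sis_diseasefree
    (βp α γ cP L : ℝ)
    (hβp : βp > 0) (hα : α ∈ Set.Ioo (0:ℝ) 1) (hγ : γ > 0) (hcP : cP > 0) (hL : L > 0)
    (hyu : 1 - γ / βp ≤ 0)
    (y : ℝ → ℝ) (hsol : IsReducedSISSol βp α γ cP L y) (hy0 : y 0 ∈ Set.Ioc (0:ℝ) 1) :
    AntitoneOn y (Set.Ici 0) ∧ Filter.Tendsto y Filter.atTop (nhds 0) := by
  obtain ⟨hrange, hode⟩ := hsol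
  obtain ⟨hα0, hα1⟩ := hα
  have hγβ : βp ≤ γ := by
    rw [sub_nonpos, le_div_iff₀ hβp, one_mul] at hyu
    exact hyu
  -- key derivative bound
  have key : ∀ t ≥ (0:ℝ), ∃ d, HasDerivAt y d t ∧ d ≤ -βp * (y t)^2 := by
    intro t ht
    obtain ⟨hy0', hy1'⟩ := hrange t ht
    obtain ⟨h1, h2, h3⟩ := hode t ht
    have hB : 0 ≤ y t * (γ - βp) := mul_nonneg hy0' (by linarith)
    rcases lt_trichotomy (y t) (cP / (L * (1 - α) * βp)) with h | h | h
    · exact ⟨_, h1 h, by nlinarith⟩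
    · obtain ⟨z, ⟨hz0, hz1⟩, hd⟩ := h3 h
      refine ⟨_, hd, ?_⟩
      rw [← h]
      have hw1 : z + α * (1 - z) ≤ 1 := by nlinarith
      have hA : 0 ≤ y t * (1 - y t) * βp * (1 - (z + α * (1 - z))) :=
        mul_nonneg (mul_nonneg (mul_nonneg hy0' (by linarith)) hβp.le) (by linarith)
      nlinarith [hA, hB]
    · refine ⟨_, h2 h, ?_⟩
      have hA : 0 ≤ y t * (1 - y t) * βp * (1 - α) :=
        mul_nonneg (mul_nonneg (mul_nonneg hy0' (by linarith)) hβp.le) (by linarith)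
      nlinarith [hA, hB]
  have hdiff : ∀ t ≥ (0:ℝ), DifferentiableAt ℝ y t := by
    intro t ht; obtain ⟨d, hd, _⟩ := key t ht; exact hd.differentiableAt
  -- antitone
  have hanti : AntitoneOn y (Set.Ici 0) := by
    apply antitoneOn_of_deriv_nonpos (convex_Ici 0)
    · intro t ht; exact (hdiff t ht).continuousAt.continuousWithinAt
    · intro t ht
      rw [interior_Ici] at ht
      exact (hdiff t (le_of_lt ht)).differentiableWithinAt
    · intro t ht
      rw [interior_Ici] at ht
      obtain ⟨d, hd, hdle⟩ := key t (le_of_lt ht)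
      rw [hd.deriv]
      have := (hrange t (le_of_lt ht)).1
      nlinarith
  refine ⟨hanti, ?_⟩
  -- convergence
  have hsmall : ∀ ε > (0:ℝ), ∃ T ≥ (0:ℝ), y T < ε := by
    intro ε hε
    by_contra hcon
    push_neg at hcon
    set K := βp * ε ^ 2 with hK
    have hKpos : 0 < K := by positivity
    -- g t = y t + K t is antitone on Ici 0
    have hganti : AntitoneOn (fun t => y t + K * t) (Set.Ici 0) := by
      apply antitoneOn_of_deriv_nonpos (convex_Ici 0)
      · intro t ht
        exact ((hdiff t ht).continuousAt.add (continuous_const.mul continuous_id).continuousAt).continuousWithinAt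
      · intro t ht
        rw [interior_Ici] at ht
        exact ((hdiff t (le_of_lt ht)).add ((differentiable_id.const_mul K) t)).differentiableWithinAt
      · intro t ht
        rw [interior_Ici] at ht
        obtain ⟨d, hd, hdle⟩ := key t (le_of_lt ht)
        have hg : HasDerivAt (fun t => y t + K * t) (d + K) t := by
          exact (hd.add ((hasDerivAt_id t).const_mul K)).congr_deriv (by ring)
        rw [hg.deriv]
        have hyε : ε ≤ y t := hcon t (le_of_lt ht)
        have hε2 : ε^2 ≤ (y t)^2 := by nlinarith
        have := mul_le_mul_of_nonneg_left hε2 hβp.le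
        rw [hK]
        linarith
    set T := (y 0 + 1) / K with hT
    have hTpos : 0 < T := div_pos (by linarith [hy0.1]) hKpos
    have := hganti (Set.self_mem_Ici) (le_of_lt hTpos : (0:ℝ) ≤ T) (le_of_lt hTpos)
    simp only [mul_zero, add_zero] at this
    have hKT : K * T = y 0 + 1 := by
      rw [hT]; field_simp [hKpos.ne']
    have hyT := (hrange T (le_of_lt hTpos)).1
    linarith
  rw [Metric.tendsto_atTop]
  intro ε hε
  obtain ⟨T, hT0, hTε⟩ := hsmall ε hε
  refine ⟨T, fun n hn => ?_⟩
  have hn0 : (0:ℝ) ≤ n := le_trans hT0 hn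
  have h1 : y n ≤ y T := hanti (Set.mem_Ici.2 hT0) (Set.mem_Ici.2 hn0) hn
  have h2 : 0 ≤ y n := (hrange n hn0).1
  rw [Real.dist_eq, sub_zero, abs_of_nonneg h2]
  linarith
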